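/- Let n ≥ 1 be an integer and let p and q be probability measures on ℝ with finite n-th moments, with quantile functions P⁻¹ and Q⁻¹. Then W_n(p,q)^n ≤ ∫₀¹ |P⁻¹(t) − Q⁻¹(t)|^n dt, i.e. the cost of the comonotone coupling is an upper bound on the n-th power of the n-th Wasserstein distance. -/

import Mathlib

open MeasureTheory ProbabilityTheory Set

/-- The set of couplings of two measures: measures on the product space whose
first and second marginals are `p` and `q` respectively. -/
def couplings {α β : Type*} [MeasurableSpace α] [MeasurableSpace β]
    (p : Measure α) (q : Measure β) : Set (Measure (α × β)) :=
  {ν | ν.map Prod.fst = p ∧ ν.map Prod.snd = q}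

/-- The quantile function (generalized inverse CDF) of a measure on `ℝ`. -/
noncomputable def quantile (p : Measure ℝ) (t : ℝ) : ℝ :=
  sInf {x : ℝ | t ≤ cdf p x}

lemma quantile_le_iff (p : Measure ℝ) [IsProbabilityMeasure p] {t : ℝ}
    (ht : t ∈ Ioo (0 : ℝ) 1) (x : ℝ) : quantile p t ≤ x ↔ t ≤ cdf p x := by
  set S := {y : ℝ | t ≤ cdf p y} with hS
  have hne : S.Nonempty := by
    obtain ⟨y, hy⟩ := ((tendsto_cdf_atTop p).eventually (eventually_ge_nhds ht.2)).exists
    exact ⟨y, hy⟩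
  have hbdd : BddBelow S := by
    obtain ⟨y₀, hy₀⟩ := ((tendsto_cdf_atBot p).eventually (eventually_lt_nhds ht.1)).exists
    refine ⟨y₀, fun y hy => ?_⟩
    by_contra hlt
    exact absurd (hy.trans (monotone_cdf p (le_of_not_ge hlt))) (not_le_of_gt hy₀)
  have hmem : sInf S ∈ S := by
    have h1 : ∀ y ∈ Ioi (sInf S), t ≤ cdf p y := by
      intro y hy
      obtain ⟨s, hsS, hsy⟩ := exists_lt_of_csInf_lt hne hy
      exact hsS.trans (monotone_cdf p hsy.le)
    have h2 : Filter.Tendsto (cdf p) (nhdsWithin (sInf S) (Ioi (sInf S))) (nhds (cdf p (sInf S))) :=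
      ((cdf p).right_continuous (sInf S)).mono_left (nhdsWithin_mono _ Ioi_subset_Ici_self)
    exact ge_of_tendsto h2 (eventually_nhdsWithin_of_forall h1)
  constructor
  · intro h
    exact hmem.trans (monotone_cdf p h)
  · intro h
    exact csInf_le hbdd h

/-- A globally measurable modification of the quantile function. -/
noncomputable def quantile' (p : Measure ℝ) (t : ℝ) : ℝ :=
  if t ∈ Ioo (0 : ℝ) 1 then quantile p t else 0

lemma measurable_quantile' (p : Measure ℝ) [IsProbabilityMeasure p] :
    Measurable (quantile' p) := by
  refine measurable_of_Iic fun x => ?_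
  have : quantile' p ⁻¹' Iic x =
      (Ioo (0 : ℝ) 1 ∩ Iic (cdf p x)) ∪ ((Ioo (0 : ℝ) 1)ᶜ ∩ {t : ℝ | (0 : ℝ) ≤ x}) := by
    ext t
    by_cases ht : t ∈ Ioo (0 : ℝ) 1
    · simp [quantile', ht, quantile_le_iff p ht x]
    · simp [quantile', ht]
  rw [this]
  exact (measurableSet_Ioo.inter measurableSet_Iic).union
    (measurableSet_Ioo.compl.inter (MeasurableSet.const _))

lemma volume_Ioo_probability : IsProbabilityMeasure (volume.restrict (Ioo (0 : ℝ) 1)) := by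
  constructor
  rw [Measure.restrict_apply MeasurableSet.univ, univ_inter, Real.volume_Ioo]
  norm_num

lemma map_quantile' (p : Measure ℝ) [IsProbabilityMeasure p] :
    Measure.map (quantile' p) (volume.restrict (Ioo (0 : ℝ) 1)) = p := by
  haveI := volume_Ioo_probability
  haveI : IsProbabilityMeasure (Measure.map (quantile' p) (volume.restrict (Ioo (0 : ℝ) 1))) :=
    Measure.isProbabilityMeasure_map (measurable_quantile' p).aemeasurable
  refine Measure.ext_of_Iic _ _ fun x => ?_
  rw [Measure.map_apply (measurable_quantile' p) measurableSet_Iic, ← ofReal_cdf p x,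
    Measure.restrict_apply ((measurable_quantile' p) measurableSet_Iic)]
  have hset : quantile' p ⁻¹' Iic x ∩ Ioo (0 : ℝ) 1 = Ioo (0 : ℝ) 1 ∩ Iic (cdf p x) := by
    ext t
    constructor
    · rintro ⟨h1, h2⟩
      refine ⟨h2, ?_⟩
      rw [mem_preimage, mem_Iic] at h1
      rw [quantile'] at h1
      simp only [h2, if_true] at h1
      exact (quantile_le_iff p h2 x).mp h1
    · rintro ⟨h1, h2⟩
      refine ⟨?_, h1⟩
      rw [mem_preimage, mem_Iic, quantile']
      simp only [h1, if_true]
      exact (quantile_le_iff p h1 x).mpr h2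
  rw [hset]
  rcases lt_or_ge (cdf p x) 1 with h | h
  · have : Ioo (0 : ℝ) 1 ∩ Iic (cdf p x) = Ioc (0 : ℝ) (cdf p x) := by
      ext t
      constructor
      · rintro ⟨⟨h1, _⟩, h2⟩; exact ⟨h1, h2⟩
      · rintro ⟨h1, h2⟩; exact ⟨⟨h1, lt_of_le_of_lt h2 h⟩, h2⟩
    rw [this, Real.volume_Ioc, sub_zero]
  · have h1 : cdf p x = 1 := le_antisymm (cdf_le_one p x) h
    have : Ioo (0 : ℝ) 1 ∩ Iic (cdf p x) = Ioo (0 : ℝ) 1 := by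
      rw [h1]
      exact inter_eq_left.mpr fun t ht => le_of_lt ht.2
    rw [this, Real.volume_Ioo, sub_zero, h1]

/-- The `n`-th power of the `n`-th Wasserstein distance between two probability measures
on `ℝ` with finite `n`-th moments is bounded above by the cost of the comonotone coupling,
i.e. the integral over `(0,1)` of the `n`-th power of the distance of the quantile
functions. -/
theorem wasserstein_le_integral_quantile (n : ℕ) (hn : 1 ≤ n)
    (p q : Measure ℝ) [IsProbabilityMeasure p] [IsProbabilityMeasure q]
    (hp : ∫⁻ x, (‖x‖₊ : ENNReal) ^ n ∂p ≠ ⊤)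
    (hq : ∫⁻ x, (‖x‖₊ : ENNReal) ^ n ∂q ≠ ⊤) :
    sInf ((fun ν => ∫⁻ z, edist z.1 z.2 ^ n ∂ν) '' couplings p q)
      ≤ ∫⁻ t in Ioo (0 : ℝ) 1, ENNReal.ofReal (|quantile p t - quantile q t| ^ n) := by
  set μ := volume.restrict (Ioo (0 : ℝ) 1) with hμ
  set g : ℝ → ℝ × ℝ := fun t => (quantile' p t, quantile' q t) with hg
  have hgm : Measurable g := (measurable_quantile' p).prodMk (measurable_quantile' q)
  set ν := Measure.map g μ with hν
  have hcoup : ν ∈ couplings p q := by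
    constructor
    · rw [hν, Measure.map_map measurable_fst hgm]
      exact map_quantile' p
    · rw [hν, Measure.map_map measurable_snd hgm]
      exact map_quantile' q
  refine le_trans (sInf_le ⟨ν, hcoup, rfl⟩) (le_of_eq ?_)
  show ∫⁻ z, edist z.1 z.2 ^ n ∂(Measure.map g μ) = _
  rw [lintegral_map ((measurable_fst.edist measurable_snd).pow_const n) hgm]
  refine setLIntegral_congr_fun measurableSet_Ioo (fun t ht => ?_)
  have h1 : quantile' p t = quantile p t := if_pos ht
  have h2 : quantile' q t = quantile q t := if_pos ht
  simp only [hg, h1, h2]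
  rw [edist_dist, Real.dist_eq, ← ENNReal.ofReal_pow (abs_nonneg _)]
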